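/- Let x ∈ ℝ^{n₁⋯n_d} be nonzero with head index e and head value a, and let (e₁,...,e_d) be the multi-index corresponding to e under the lexicographic index correspondence. Define projections Ξ_i = (δ_{n₁}^{e₁})^T ⊗ ⋯ ⊗ (δ_{n_{i−1}}^{e_{i−1}})^T ⊗ I_{n_i} ⊗ (δ_{n_{i+1}}^{e_{i+1}})^T ⊗ ⋯ ⊗ (δ_{n_d}^{e_d})^T. If x is decomposable as a Kronecker product of vectors of sizes n₁, ..., n_d, then setting x₀ = x/a and x_i = Ξ_i x₀, each x_i is monic and x = a · (x₁ ⊗ ⋯ ⊗ x_d). -/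

import Mathlib

open Matrix

/-- Row/left component of a lexicographic index in `Fin (a*b)`. -/
def fdiv {a b : ℕ} (k : Fin (a * b)) : Fin a :=
  ⟨(k : ℕ) / b, Nat.div_lt_of_lt_mul (Nat.mul_comm a b ▸ k.isLt)⟩

/-- Right component of a lexicographic index in `Fin (a*b)`. -/
def fmod {a b : ℕ} (k : Fin (a * b)) : Fin b :=
  ⟨(k : ℕ) % b, Nat.mod_lt _ (Nat.pos_of_ne_zero (by rintro rfl; exact absurd k.isLt (by simp)))⟩

/-- Kronecker product of column vectors (lexicographic order of indices). -/
def vKron {m n : ℕ} (x : Fin m → ℝ) (y : Fin n → ℝ) : Fin (m * n) → ℝ :=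
  fun k => x (fdiv k) * y (fmod k)

/-- Kronecker product of matrices, with `Fin`-indexed dimensions. -/
def mKron {m n p q : ℕ} (A : Matrix (Fin m) (Fin n) ℝ) (B : Matrix (Fin p) (Fin q) ℝ) :
    Matrix (Fin (m * p)) (Fin (n * q)) ℝ :=
  fun i j => A (fdiv i) (fdiv j) * B (fmod i) (fmod j)

/-- Semi-tensor product of matrices: A ⋉ B = (A ⊗ I_{t/n})(B ⊗ I_{t/p}), t = lcm n p. -/
def stp {m n p q : ℕ} (A : Matrix (Fin m) (Fin n) ℝ) (B : Matrix (Fin p) (Fin q) ℝ) :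
    Matrix (Fin (m * (Nat.lcm n p / n))) (Fin (q * (Nat.lcm n p / p))) ℝ :=
  mKron A (1 : Matrix (Fin (Nat.lcm n p / n)) (Fin (Nat.lcm n p / n)) ℝ) *
    (Matrix.reindex (finCongr (by
        rw [Nat.mul_div_cancel' (Nat.dvd_lcm_right n p),
          Nat.mul_div_cancel' (Nat.dvd_lcm_left n p)])) (Equiv.refl _)
      (mKron B (1 : Matrix (Fin (Nat.lcm n p / p)) (Fin (Nat.lcm n p / p)) ℝ)))

/-- The swap matrix W_{[m,n]}: sends x ⊗ y to y ⊗ x. -/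
def swapM (m n : ℕ) : Matrix (Fin (n * m)) (Fin (m * n)) ℝ :=
  fun i j => if (i : ℕ) = (fmod j : ℕ) * m + (fdiv j : ℕ) then 1 else 0

/-- Column-stacking vectorization of a matrix. -/
def vecc {m n : ℕ} (A : Matrix (Fin m) (Fin n) ℝ) : Fin (n * m) → ℝ :=
  fun k => A (fmod k) (fdiv k)

/-- Iterated Kronecker product of column vectors. -/
def kronD : (d : ℕ) → (n : Fin d → ℕ) → ((i : Fin d) → Fin (n i) → ℝ) → Fin (∏ i, n i) → ℝ
  | 0, _, _ => fun _ => 1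
  | d + 1, n, x => fun k =>
      vKron (x 0) (kronD d (fun i => n i.succ) (fun i => x i.succ))
        (Fin.cast (by rw [Fin.prod_univ_succ]) k)

/-- Lexicographic encoding of a multi-index into a single natural number. -/
def encode : (d : ℕ) → (n : Fin d → ℕ) → ((i : Fin d) → Fin (n i)) → ℕ
  | 0, _, _ => 0
  | d + 1, n, f =>
      (f 0 : ℕ) * (∏ i : Fin d, n i.succ) + encode d (fun i => n i.succ) (fun i => f i.succ)

theorem encode_lt : ∀ (d : ℕ) (n : Fin d → ℕ) (f : (i : Fin d) → Fin (n i)),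
    encode d n f < ∏ i, n i := by
  intro d
  induction d with
  | zero => intro n f; simp [encode]
  | succ d ih =>
    intro n f
    rw [Fin.prod_univ_succ]
    have h1 := ih (fun i => n i.succ) (fun i => f i.succ)
    have h2 := (f 0).isLt
    calc (f 0 : ℕ) * (∏ i : Fin d, n i.succ)
        + encode d (fun i => n i.succ) (fun i => f i.succ)
        < (f 0 : ℕ) * (∏ i : Fin d, n i.succ) + (∏ i : Fin d, n i.succ) :=
          Nat.add_lt_add_left h1 _
      _ = ((f 0 : ℕ) + 1) * (∏ i : Fin d, n i.succ) := by ring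
      _ ≤ n 0 * (∏ i : Fin d, n i.succ) := Nat.mul_le_mul_right _ h2

/-- The MDA projection map Ξ_i determined by the head multi-index e. -/
def proj (d : ℕ) (n : Fin d → ℕ) (e : (i : Fin d) → Fin (n i)) (i : Fin d)
    (x : Fin (∏ j, n j) → ℝ) : Fin (n i) → ℝ :=
  fun k => x ⟨encode d n (Function.update e i k), encode_lt d n _⟩

/-- A vector is monic if its first nonzero entry equals 1. -/
def Monic {N : ℕ} (v : Fin N → ℝ) : Prop :=
  ∃ e : Fin N, v e = 1 ∧ ∀ j : Fin N, j < e → v j = 0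

lemma divHelperX (a r P : ℕ) (h : r < P) : (a * P + r) / P = a := by
  rw [Nat.add_comm, Nat.mul_comm, Nat.add_mul_div_left _ _ (Nat.lt_of_le_of_lt (Nat.zero_le r) h),
    Nat.div_eq_of_lt h, Nat.zero_add]

lemma modHelperX (a r P : ℕ) (h : r < P) : (a * P + r) % P = r := by
  rw [Nat.add_comm, Nat.mul_comm, Nat.add_mul_mod_self_left, Nat.mod_eq_of_lt h]

lemma encode_lt_encode : ∀ (d : ℕ) (n : Fin d → ℕ) (f g : (i : Fin d) → Fin (n i)) (i : Fin d),
    (f i : ℕ) < (g i : ℕ) → (∀ j, j < i → f j = g j) → encode d n f < encode d n g := by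
  intro d
  induction d with
  | zero => intro _ _ _ i; exact i.elim0
  | succ d ih =>
    intro n f g i hlt heq
    induction i using Fin.cases with
    | zero =>
      simp only [encode]
      calc (f 0 : ℕ) * (∏ i : Fin d, n i.succ)
            + encode d (fun i => n i.succ) (fun i => f i.succ)
          < (f 0 : ℕ) * (∏ i : Fin d, n i.succ) + (∏ i : Fin d, n i.succ) :=
            Nat.add_lt_add_left (encode_lt d _ _) _
        _ = ((f 0 : ℕ) + 1) * (∏ i : Fin d, n i.succ) := by ring
        _ ≤ (g 0 : ℕ) * (∏ i : Fin d, n i.succ) := Nat.mul_le_mul_right _ hlt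
        _ ≤ _ := Nat.le_add_right _ _
    | succ j =>
      have h0 : f 0 = g 0 := heq 0 (Fin.succ_pos j)
      simp only [encode, h0]
      refine Nat.add_lt_add_left ?_ _
      exact ih (fun i => n i.succ) (fun i => f i.succ) (fun i => g i.succ) j hlt
        (fun m hm => heq m.succ (Fin.succ_lt_succ_iff.mpr hm))

def decode : (d : ℕ) → (n : Fin d → ℕ) → Fin (∏ i, n i) → ((i : Fin d) → Fin (n i))
  | 0, _, _ => fun i => i.elim0
  | d + 1, n, k =>
      have hk : (k : ℕ) < n 0 * ∏ i : Fin d, n i.succ :=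
        lt_of_lt_of_eq k.isLt (Fin.prod_univ_succ n)
      have hP : 0 < ∏ i : Fin d, n i.succ := by
        rcases Nat.eq_zero_or_pos (∏ i : Fin d, n i.succ) with h | h
        · rw [h, Nat.mul_zero] at hk; exact absurd hk (Nat.not_lt_zero _)
        · exact h
      Fin.cons ⟨(k : ℕ) / ∏ i : Fin d, n i.succ,
          Nat.div_lt_of_lt_mul (by rwa [Nat.mul_comm] at hk)⟩
        (decode d (fun i => n i.succ) ⟨(k : ℕ) % ∏ i : Fin d, n i.succ, Nat.mod_lt _ hP⟩)

lemma encode_decode : ∀ (d : ℕ) (n : Fin d → ℕ) (k : Fin (∏ i, n i)),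
    encode d n (decode d n k) = (k : ℕ) := by
  intro d
  induction d with
  | zero =>
    intro n k
    have := k.isLt
    simp only [Finset.univ_eq_empty, Finset.prod_empty] at this
    simp [encode]; omega
  | succ d ih =>
    intro n k
    simp only [encode, decode, Fin.cons_zero, Fin.cons_succ]
    rw [ih]
    rw [Nat.mul_comm ((k : ℕ) / _)]
    exact Nat.div_add_mod _ _

lemma kronD_at_encode : ∀ (d : ℕ) (n : Fin d → ℕ) (y : (i : Fin d) → Fin (n i) → ℝ)
    (f : (i : Fin d) → Fin (n i)),
    kronD d n y ⟨encode d n f, encode_lt d n f⟩ = ∏ i, y i (f i) := by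
  intro d
  induction d with
  | zero => intro n y f; simp [kronD]
  | succ d ih =>
    intro n y f
    simp only [kronD, vKron, Fin.prod_univ_succ]
    have hrest := encode_lt d (fun i => n i.succ) (fun i => f i.succ)
    congr 1
    · congr 1
      simp only [fdiv, encode]
      ext
      simp only [Fin.coe_cast]
      exact divHelperX _ _ _ hrest
    · have := ih (fun i => n i.succ) (fun i => y i.succ) (fun i => f i.succ)
      rw [← this]
      congr 1
      simp only [fmod, encode]
      ext
      simp only [Fin.coe_cast]
      exact modHelperX _ _ _ hrest

lemma prod_comp_update (d : ℕ) (n : Fin d → ℕ) (y : (i : Fin d) → Fin (n i) → ℝ)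
    (e : (i : Fin d) → Fin (n i)) (i : Fin d) (k : Fin (n i)) :
    ∏ j, y j (Function.update e i k j)
      = y i k * ∏ j ∈ Finset.univ.erase i, y j (e j) := by
  have hfun : (fun j => y j (Function.update e i k j))
      = Function.update (fun j => y j (e j)) i (y i k) := by
    funext j
    by_cases h : j = i
    · subst h; simp
    · simp [Function.update_of_ne h]
  calc ∏ j, y j (Function.update e i k j)
      = ∏ j, Function.update (fun j => y j (e j)) i (y i k) j := by rw [hfun]
    _ = y i k * ∏ j ∈ Finset.univ \ {i}, y j (e j) :=
        Finset.prod_update_of_mem (Finset.mem_univ i) _ _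
    _ = y i k * ∏ j ∈ Finset.univ.erase i, y j (e j) := by rw [Finset.erase_eq]

/-- If x is decomposable, then the MDA projections x_i = Ξ_i (x/a) are monic
and x = a · (x₁ ⊗ ⋯ ⊗ x_d), where a is the head value and e the head multi-index of x. -/
theorem mda_decomposes (d : ℕ) (n : Fin d → ℕ) (x : Fin (∏ i, n i) → ℝ)
    (e : (i : Fin d) → Fin (n i)) (a : ℝ) (ha : a ≠ 0)
    (he : x ⟨encode d n e, encode_lt d n e⟩ = a)
    (hmin : ∀ j : Fin (∏ i, n i), (j : ℕ) < encode d n e → x j = 0)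
    (hdec : ∃ y : (i : Fin d) → Fin (n i) → ℝ, x = kronD d n y) :
    (∀ i, Monic (proj d n e i (a⁻¹ • x))) ∧
    x = a • kronD d n (fun i => proj d n e i (a⁻¹ • x)) := by
  obtain ⟨y, rfl⟩ := hdec
  have hA : ∏ i, y i (e i) = a := by rw [← he, kronD_at_encode]
  have hyne : ∀ i, y i (e i) ≠ 0 := by
    intro i h0
    exact ha (hA ▸ Finset.prod_eq_zero (Finset.mem_univ i) h0)
  have hQ : ∀ i, y i (e i) * ∏ j ∈ Finset.univ.erase i, y j (e j) = a := by
    intro i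
    exact (Finset.mul_prod_erase Finset.univ (fun j => y j (e j)) (Finset.mem_univ i)).trans hA
  have hproj : ∀ (i : Fin d) (k : Fin (n i)),
      proj d n e i (a⁻¹ • kronD d n y) k = y i k / y i (e i) := by
    intro i k
    simp only [proj, Pi.smul_apply, smul_eq_mul]
    rw [kronD_at_encode, prod_comp_update]
    rw [eq_div_iff (hyne i)]
    have := hQ i
    field_simp
    linear_combination y i k * this
  constructor
  · intro i
    refine ⟨e i, ?_, ?_⟩
    · rw [hproj, div_self (hyne i)]
    · intro j hj
      simp only [proj, Pi.smul_apply, smul_eq_mul]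
      rw [hmin _ (encode_lt_encode d n _ e i (by simpa using hj)
        (fun m hm => Function.update_of_ne (Fin.ne_of_lt hm) _ _))]
      ring
  · funext k
    have hk : k = ⟨encode d n (decode d n k), encode_lt d n _⟩ :=
      Fin.ext (encode_decode d n k).symm
    rw [hk]
    rw [kronD_at_encode]
    simp only [Pi.smul_apply, smul_eq_mul]
    rw [kronD_at_encode]
    have : ∀ i : Fin d, proj d n e i (a⁻¹ • kronD d n y) (decode d n k i)
        = y i (decode d n k i) / y i (e i) := fun i => hproj i _
    rw [Finset.prod_congr rfl (fun i _ => this i), Finset.prod_div_distrib, hA]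
    field_simp
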